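/- If G is a finite simple P_5-free graph (containing no induced path on five vertices) and M is an acyclic matching in G, then every connected component of G(M) is isomorphic to the path P_2 on two vertices or to the path P_4 on four vertices; that is, G(M) is a disjoint union of P_4's and K_2's. -/

import Mathlib

open SimpleGraph

/-- A graph `G` is *P₅-free* if it contains no induced subgraph isomorphic to the path
on five vertices.  (Graph embeddings `↪g` are exactly induced-subgraph copies.) -/
def P5Free {V : Type*} (G : SimpleGraph V) : Prop :=
  IsEmpty (pathGraph 5 ↪g G)

namespace P5Aux

variable {W : Type*} {H : SimpleGraph W}

lemma nadj2 (hac : H.IsAcyclic) {x y z : W} (h1 : H.Adj x y) (h2 : H.Adj y z)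
    (hxz : x ≠ z) : ¬ H.Adj x z := by
  intro h
  have hp : (Walk.cons h1 (Walk.cons h2 Walk.nil) : H.Walk x z).IsPath := by
    simp [Walk.isPath_def, h1.ne, h2.ne, hxz]
  have := isAcyclic_iff_path_unique.mp hac (Path.singleton h) ⟨_, hp⟩
  have hl := congrArg (fun p : H.Path x z => p.1.length) this
  simp [Path.singleton] at hl

lemma nadj3 (hac : H.IsAcyclic) {x y z w : W} (h1 : H.Adj x y) (h2 : H.Adj y z)
    (h3 : H.Adj z w) (hxz : x ≠ z) (hxw : x ≠ w) (hyw : y ≠ w) : ¬ H.Adj x w := by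
  intro h
  have hp : (Walk.cons h1 (Walk.cons h2 (Walk.cons h3 Walk.nil)) : H.Walk x w).IsPath := by
    simp [Walk.isPath_def, h1.ne, h2.ne, h3.ne, hxz, hxw, hyw]
  have := isAcyclic_iff_path_unique.mp hac (Path.singleton h) ⟨_, hp⟩
  have hl := congrArg (fun p : H.Path x w => p.1.length) this
  simp [Path.singleton] at hl

lemma nadj4 (hac : H.IsAcyclic) {x y z w u : W} (h1 : H.Adj x y) (h2 : H.Adj y z)
    (h3 : H.Adj z w) (h4 : H.Adj w u) (hxz : x ≠ z) (hxw : x ≠ w) (hxu : x ≠ u)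
    (hyw : y ≠ w) (hyu : y ≠ u) (hzu : z ≠ u) : ¬ H.Adj x u := by
  intro h
  have hp : (Walk.cons h1 (Walk.cons h2 (Walk.cons h3 (Walk.cons h4 Walk.nil))) :
      H.Walk x u).IsPath := by
    simp [Walk.isPath_def, h1.ne, h2.ne, h3.ne, h4.ne, hxz, hxw, hxu, hyw, hyu, hzu]
  have := isAcyclic_iff_path_unique.mp hac (Path.singleton h) ⟨_, hp⟩
  have hl := congrArg (fun p : H.Path x u => p.1.length) this
  simp [Path.singleton] at hl

set_option linter.unusedTactic false in
set_option linter.unreachableTactic false in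
def buildP5 (a b c d e : W)
    (hab : a ≠ b) (hac : a ≠ c) (had : a ≠ d) (hae : a ≠ e)
    (hbc : b ≠ c) (hbd : b ≠ d) (hbe : b ≠ e)
    (hcd : c ≠ d) (hce : c ≠ e) (hde : d ≠ e)
    (h1 : H.Adj a b) (h2 : H.Adj b c) (h3 : H.Adj c d) (h4 : H.Adj d e)
    (n1 : ¬ H.Adj a c) (n2 : ¬ H.Adj a d) (n3 : ¬ H.Adj a e)
    (n4 : ¬ H.Adj b d) (n5 : ¬ H.Adj b e) (n6 : ¬ H.Adj c e) :
    pathGraph 5 ↪g H := by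
  refine ⟨⟨![a, b, c, d, e], ?_⟩, ?_⟩
  · intro i j hij
    fin_cases i <;> fin_cases j <;> simp_all
  · intro i j
    have n1' : ¬ H.Adj c a := fun h => n1 h.symm
    have n2' : ¬ H.Adj d a := fun h => n2 h.symm
    have n3' : ¬ H.Adj e a := fun h => n3 h.symm
    have n4' : ¬ H.Adj d b := fun h => n4 h.symm
    have n5' : ¬ H.Adj e b := fun h => n5 h.symm
    have n6' : ¬ H.Adj e c := fun h => n6 h.symm
    change H.Adj (![a, b, c, d, e] i) (![a, b, c, d, e] j) ↔ _
    fin_cases i <;> fin_cases j <;>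
      simp [pathGraph_adj, h1, h2, h3, h4, h1.symm, h2.symm, h3.symm, h4.symm,
        n1, n2, n3, n4, n5, n6, n1', n2', n3', n4', n5', n6'] <;> omega

noncomputable def iso2 (H : SimpleGraph W) (s : Set W) (v0 v1 : W)
    (hne : v0 ≠ v1) (hs : s = {v0, v1}) (hadj : H.Adj v0 v1) :
    (H.induce s) ≃g pathGraph 2 := by
  classical
  have mem : ∀ x : ↑s, (x : W) = v0 ∨ (x : W) = v1 := by
    intro x
    have h2 : (x : W) ∈ ({v0, v1} : Set W) := by rw [← hs]; exact x.2
    simpa using h2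
  refine ⟨⟨fun x => if (x : W) = v0 then 0 else 1,
    fun i => if i = 0 then ⟨v0, by simp [hs]⟩ else ⟨v1, by simp [hs]⟩, ?_, ?_⟩, ?_⟩
  · intro x
    rcases mem x with h | h <;> (apply Subtype.ext; simp [h, hne.symm])
  · intro i
    fin_cases i <;> simp [hne.symm]
  · intro x y
    rcases mem x with hx | hx <;> rcases mem y with hy | hy <;>
      simp_all [comap_adj, hne, hne.symm, pathGraph_adj, hadj, hadj.symm]

noncomputable def iso4 (H : SimpleGraph W) (s : Set W) (v0 v1 v2 v3 : W)
    (h01' : v0 ≠ v1) (h02' : v0 ≠ v2) (h03' : v0 ≠ v3) (h12' : v1 ≠ v2)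
    (h13' : v1 ≠ v3) (h23' : v2 ≠ v3)
    (hs : s = {v0, v1, v2, v3})
    (a01 : H.Adj v0 v1) (a12 : H.Adj v1 v2) (a23 : H.Adj v2 v3)
    (n02 : ¬ H.Adj v0 v2) (n03 : ¬ H.Adj v0 v3) (n13 : ¬ H.Adj v1 v3) :
    (H.induce s) ≃g pathGraph 4 := by
  classical
  have n02' : ¬ H.Adj v2 v0 := fun h => n02 h.symm
  have n03' : ¬ H.Adj v3 v0 := fun h => n03 h.symm
  have n13' : ¬ H.Adj v3 v1 := fun h => n13 h.symm
  have mem : ∀ x : ↑s, (x : W) = v0 ∨ (x : W) = v1 ∨ (x : W) = v2 ∨ (x : W) = v3 := by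
    intro x
    have h2 : (x : W) ∈ ({v0, v1, v2, v3} : Set W) := by rw [← hs]; exact x.2
    simpa using h2
  refine ⟨⟨fun x => if (x : W) = v0 then 0 else if (x : W) = v1 then 1
      else if (x : W) = v2 then 2 else 3,
    fun i => if i = 0 then ⟨v0, by simp [hs]⟩ else if i = 1 then ⟨v1, by simp [hs]⟩
      else if i = 2 then ⟨v2, by simp [hs]⟩ else ⟨v3, by simp [hs]⟩, ?_, ?_⟩, ?_⟩
  · intro x
    rcases mem x with h | h | h | h <;>
      (apply Subtype.ext;
       simp [h, h01'.symm, h02'.symm, h03'.symm, h12'.symm, h13'.symm, h23'.symm])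
  · intro i
    fin_cases i <;>
      simp [h01'.symm, h02'.symm, h03'.symm, h12'.symm, h13'.symm, h23'.symm]
  · intro x y
    rcases mem x with hx | hx | hx | hx <;> rcases mem y with hy | hy | hy | hy <;>
      simp_all [comap_adj, pathGraph_adj, h01', h02', h03', h12', h13', h23',
        h01'.symm, h02'.symm, h03'.symm, h12'.symm, h13'.symm, h23'.symm,
        a01, a12, a23, a01.symm, a12.symm, a23.symm] <;> decide

/-- Closure of a set under adjacency captures every walk endpoint. -/
lemma walk_end_mem {S : Set W} (hS : ∀ x ∈ S, ∀ y, H.Adj x y → y ∈ S)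
    {x y : W} (p : H.Walk x y) (hx : x ∈ S) : y ∈ S := by
  induction p with
  | nil => exact hx
  | cons h _ ih => exact ih (hS _ hx _ h)

section Key

variable (hfree : P5Free H) (hac : H.IsAcyclic) (m : W → W)
  (hm : ∀ v, H.Adj v (m v)) (hinv : ∀ v, m (m v) = v)

include hfree hac hm hinv in
/-- Degree lemma: a vertex cannot have two distinct neighbours, both different
from its matching partner. -/
lemma deg_le {v a b : W} (hva : H.Adj v a) (hvb : H.Adj v b)
    (hab : a ≠ b) (hamv : a ≠ m v) (hbmv : b ≠ m v) : False := by
  have haa : H.Adj a (m a) := hm a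
  have hbb : H.Adj b (m b) := hm b
  have nab : ¬ H.Adj a b := nadj2 hac hva.symm hvb hab
  have dmav : m a ≠ v := fun h => hamv (by rw [← h]; exact (hinv a).symm)
  have dmbv : m b ≠ v := fun h => hbmv (by rw [← h]; exact (hinv b).symm)
  have dmab : m a ≠ b := fun h => nab (h ▸ haa)
  have dmba : m b ≠ a := fun h => nab ((h ▸ hbb).symm)
  have dmamb : m a ≠ m b := fun h => hab (by rw [← hinv a, h, hinv])
  have n_ma_v : ¬ H.Adj (m a) v := nadj2 hac haa.symm hva.symm dmav
  have n_ma_b : ¬ H.Adj (m a) b := nadj3 hac haa.symm hva.symm hvb dmav dmab hab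
  have n_a_mb : ¬ H.Adj a (m b) :=
    nadj3 hac hva.symm hvb hbb hab (fun h => dmba h.symm) dmbv.symm
  have n_v_mb : ¬ H.Adj v (m b) := nadj2 hac hvb hbb dmbv.symm
  have n_ma_mb : ¬ H.Adj (m a) (m b) :=
    nadj4 hac haa.symm hva.symm hvb hbb dmav dmab dmamb hab
      (fun h => dmba h.symm) dmbv.symm
  exact hfree.elim
    (buildP5 (m a) a v b (m b) haa.ne' dmav dmab dmamb
      hva.ne' hab (fun h => dmba h.symm) hvb.ne dmbv.symm hbb.ne
      haa.symm hva.symm hvb hbb n_ma_v n_ma_b n_ma_mb nab n_a_mb n_v_mb)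

include hfree hac hm hinv in
/-- The `P₄` case: the partner of `v0` has a neighbour other than `v0`. -/
lemma p4Case (v0 : W) (hu : ∃ u, H.Adj (m v0) u ∧ u ≠ v0) :
    Nonempty ((H.induce (H.connectedComponentMk v0).supp) ≃g pathGraph 4) := by
  classical
  obtain ⟨u, h1u, hune⟩ := hu
  set v1 := m v0 with hv1
  have h01 : H.Adj v0 v1 := hm v0
  have hmv1 : m v1 = v0 := by rw [hv1]; exact hinv v0
  set w := m u with hw'
  have hw : H.Adj u w := hm u
  have hmw : m w = u := by rw [hw']; exact hinv u
  have huv1 : u ≠ v1 := h1u.ne'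
  have huv0 : u ≠ v0 := hune
  have hwv1 : w ≠ v1 := by
    intro h
    apply hune
    calc u = m w := hmw.symm
    _ = m v1 := by rw [h]
    _ = v0 := hmv1
  have hwv0 : w ≠ v0 := by
    intro h
    apply huv1
    calc u = m w := hmw.symm
    _ = m v0 := by rw [h]
    _ = v1 := hv1.symm
  have n_v0_u : ¬ H.Adj v0 u := nadj2 hac h01 h1u hune.symm
  have n_v1_w : ¬ H.Adj v1 w := nadj2 hac h1u hw hwv1.symm
  have n_v0_w : ¬ H.Adj v0 w := nadj3 hac h01 h1u hw hune.symm hwv0.symm hwv1.symm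
  -- the component support equals {v0, v1, u, w}
  have hclosed : ∀ x ∈ ({v0, v1, u, w} : Set W), ∀ y, H.Adj x y →
      y ∈ ({v0, v1, u, w} : Set W) := by
    rintro x hx y hxy
    simp only [Set.mem_insert_iff, Set.mem_singleton_iff] at hx
    rcases hx with h | h | h | h <;> rw [h] at hxy <;> clear h
    · -- neighbours of v0 : only v1
      by_contra hy
      simp only [Set.mem_insert_iff, Set.mem_singleton_iff, not_or] at hy
      obtain ⟨hyv0, hyv1, hyu, hyw⟩ := hy
      have nyv1 : ¬ H.Adj y v1 := by
        intro h
        exact deg_le hfree hac m hm hinv h.symm h1u hyu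
          (by rw [hmv1]; exact hyv0) (by rw [hmv1]; exact hune)
      have nyu : ¬ H.Adj y u := nadj3 hac hxy.symm h01 h1u hyv1 hyu hune.symm
      have nyw : ¬ H.Adj y w :=
        nadj4 hac hxy.symm h01 h1u hw hyv1 hyu hyw hune.symm hwv0.symm hwv1.symm
      exact (hfree.elim
        (buildP5 y v0 v1 u w hyv0 hyv1 hyu hyw h01.ne hune.symm hwv0.symm
          huv1.symm hwv1.symm hw.ne
          hxy.symm h01 h1u hw nyv1 nyu nyw n_v0_u n_v0_w n_v1_w))
    · -- neighbours of v1 : only v0 and u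
      by_contra hy
      simp only [Set.mem_insert_iff, Set.mem_singleton_iff, not_or] at hy
      obtain ⟨hyv0, hyv1, hyu, hyw⟩ := hy
      exact deg_le hfree hac m hm hinv h1u hxy (Ne.symm hyu)
        (by rw [hmv1]; exact hune) (by rw [hmv1]; exact hyv0)
    · -- neighbours of u : only v1 and w
      by_contra hy
      simp only [Set.mem_insert_iff, Set.mem_singleton_iff, not_or] at hy
      obtain ⟨hyv0, hyv1, hyu, hyw⟩ := hy
      exact deg_le hfree hac m hm hinv h1u.symm hxy (Ne.symm hyv1)
        (by rw [← hw']; exact hwv1.symm) (by rw [← hw']; exact hyw)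
    · -- neighbours of w : only u
      by_contra hy
      simp only [Set.mem_insert_iff, Set.mem_singleton_iff, not_or] at hy
      obtain ⟨hyv0, hyv1, hyu, hyw⟩ := hy
      have nyu : ¬ H.Adj y u := by
        intro h
        exact deg_le hfree hac m hm hinv h1u.symm h.symm (Ne.symm hyv1)
          (by rw [← hw']; exact hwv1.symm) (by rw [← hw']; exact hyw)
      have nyv1 : ¬ H.Adj y v1 := nadj3 hac hxy.symm hw.symm h1u.symm hyu hyv1 hwv1
      have nyv0 : ¬ H.Adj y v0 :=
        nadj4 hac hxy.symm hw.symm h1u.symm h01.symm hyu hyv1 hyv0 hwv1 hwv0 huv0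
      exact (hfree.elim
        (buildP5 y w u v1 v0 hyw hyu hyv1 hyv0 hw.ne' hwv1 hwv0 huv1 huv0 h01.ne'
          hxy.symm hw.symm h1u.symm h01.symm
          nyu nyv1 nyv0 (fun h => n_v1_w h.symm) (fun h => n_v0_w h.symm)
          (fun h => n_v0_u h.symm)))
  have hsupp : (H.connectedComponentMk v0).supp = {v0, v1, u, w} := by
    apply Set.Subset.antisymm
    · intro y hy
      rw [ConnectedComponent.mem_supp_iff] at hy
      have hr : H.Reachable v0 y := (ConnectedComponent.eq.mp hy).symm
      obtain ⟨p⟩ := hr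
      exact walk_end_mem hclosed p (by simp)
    · intro y hy
      simp only [Set.mem_insert_iff, Set.mem_singleton_iff] at hy
      rcases hy with h | h | h | h
      · rw [h, ConnectedComponent.mem_supp_iff]
      · rw [h, ConnectedComponent.mem_supp_iff]
        exact ConnectedComponent.connectedComponentMk_eq_of_adj h01.symm
      · rw [h, ConnectedComponent.mem_supp_iff]
        exact (ConnectedComponent.connectedComponentMk_eq_of_adj h1u.symm).trans
          (ConnectedComponent.connectedComponentMk_eq_of_adj h01.symm)
      · rw [h, ConnectedComponent.mem_supp_iff]
        exact (ConnectedComponent.connectedComponentMk_eq_of_adj hw.symm).trans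
          ((ConnectedComponent.connectedComponentMk_eq_of_adj h1u.symm).trans
            (ConnectedComponent.connectedComponentMk_eq_of_adj h01.symm))
  exact ⟨iso4 H _ v0 v1 u w h01.ne hune.symm hwv0.symm huv1.symm hwv1.symm hw.ne
    hsupp h01 h1u hw n_v0_u n_v0_w n_v1_w⟩

include hfree hac hm hinv in
lemma key0 (v0 : W) :
    Nonempty ((H.induce (H.connectedComponentMk v0).supp) ≃g pathGraph 2) ∨
    Nonempty ((H.induce (H.connectedComponentMk v0).supp) ≃g pathGraph 4) := by
  classical
  by_cases hA : ∃ u, H.Adj (m v0) u ∧ u ≠ v0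
  · exact Or.inr (p4Case hfree hac m hm hinv v0 hA)
  by_cases hB : ∃ u, H.Adj v0 u ∧ u ≠ m v0
  · right
    have h : ∃ u, H.Adj (m (m v0)) u ∧ u ≠ m v0 := by rw [hinv]; exact hB
    have hres := p4Case hfree hac m hm hinv (m v0) h
    rwa [ConnectedComponent.connectedComponentMk_eq_of_adj (hm v0)]
  · left
    push_neg at hA hB
    have h01 : H.Adj v0 (m v0) := hm v0
    have hclosed : ∀ x ∈ ({v0, m v0} : Set W), ∀ y, H.Adj x y →
        y ∈ ({v0, m v0} : Set W) := by
      rintro x hx y hxy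
      simp only [Set.mem_insert_iff, Set.mem_singleton_iff] at hx
      rcases hx with h | h <;> rw [h] at hxy <;> clear h
      · simp [hB y hxy]
      · simp [hA y hxy]
    have hsupp : (H.connectedComponentMk v0).supp = {v0, m v0} := by
      apply Set.Subset.antisymm
      · intro y hy
        rw [ConnectedComponent.mem_supp_iff] at hy
        have hr : H.Reachable v0 y := (ConnectedComponent.eq.mp hy).symm
        obtain ⟨p⟩ := hr
        exact walk_end_mem hclosed p (by simp)
      · intro y hy
        simp only [Set.mem_insert_iff, Set.mem_singleton_iff] at hy
        rcases hy with h | h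
        · rw [h, ConnectedComponent.mem_supp_iff]
        · rw [h, ConnectedComponent.mem_supp_iff]
          exact ConnectedComponent.connectedComponentMk_eq_of_adj h01.symm
    exact ⟨iso2 H _ v0 (m v0) h01.ne hsupp h01⟩

include hfree hac hm hinv in
lemma key (c : H.ConnectedComponent) :
    Nonempty ((H.induce c.supp) ≃g pathGraph 2) ∨
    Nonempty ((H.induce c.supp) ≃g pathGraph 4) := by
  obtain ⟨v0, rfl⟩ := c.exists_rep
  exact key0 hfree hac m hm hinv v0

end Key

end P5Aux

/-- If `G` is a finite simple `P₅`-free graph and `M` is an acyclic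
matching in `G`, then every connected component of `G(M)` is isomorphic to `K₂`
(the path on two vertices) or to the path `P₄` on four vertices. -/
theorem p5Free_acyclicMatching_components {V : Type*} [Fintype V]
    (G : SimpleGraph V) (hfree : P5Free G) (M : G.Subgraph) (hM : M.IsMatching)
    (hac : (G.induce M.verts).IsAcyclic) :
    ∀ c : (G.induce M.verts).ConnectedComponent,
      Nonempty (((G.induce M.verts).induce c.supp) ≃g pathGraph 2) ∨
      Nonempty (((G.induce M.verts).induce c.supp) ≃g pathGraph 4) := by
  classical
  intro c
  have hfreeH : P5Free (G.induce M.verts) :=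
    ⟨fun e => hfree.false ((SimpleGraph.Embedding.induce M.verts).comp e)⟩
  let mfun : ↥M.verts → ↥M.verts := fun v =>
    ⟨(hM v.2).choose, M.edge_vert (hM v.2).choose_spec.1.symm⟩
  have hmadj : ∀ v : ↥M.verts, M.Adj ↑v ↑(mfun v) := fun v => (hM v.2).choose_spec.1
  have hm : ∀ v, (G.induce M.verts).Adj v (mfun v) := by
    intro v
    simp only [comap_adj, Function.Embedding.coe_subtype]
    exact M.adj_sub (hmadj v)
  have hinv : ∀ v, mfun (mfun v) = v := by
    intro v
    exact Subtype.ext (((hM (mfun v).2).choose_spec.2 ↑v (hmadj v).symm).symm)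
  exact P5Aux.key hfreeH hac mfun hm hinv c
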